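/- Let H be a real inner product space, let A, B : H → ℝ be convex differentiable functions, and let λ > 0. If f minimizes g ↦ A(g) + (λ/2)‖g‖² over H and f′ minimizes g ↦ B(g) + (λ/2)‖g‖² over H, then λ‖f − f′‖² ≤ (A(f′) − A(f)) + (B(f) − B(f′)). -/

import Mathlib

open Set

private lemma l2_min_first_order
    {H : Type*} [NormedAddCommGroup H] [InnerProductSpace ℝ H]
    (A : H → ℝ) (hAconv : ConvexOn ℝ univ A)
    (lam : ℝ) (hlam : 0 < lam) (f : H)
    (hf : ∀ g : H, A f + lam / 2 * ‖f‖ ^ 2 ≤ A g + lam / 2 * ‖g‖ ^ 2)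
    (g : H) :
    lam * inner ℝ f (f - g) ≤ A g - A f := by
  have key : ∀ t : ℝ, 0 < t → t ≤ 1 →
      lam * inner ℝ f (f - g) ≤ A g - A f + t * (lam / 2 * ‖g - f‖ ^ 2) := by
    intro t ht ht1
    have hmem : (∀ x : H, x ∈ (univ : Set H)) := fun _ => mem_univ _
    have hconv := hAconv.2 (hmem f) (hmem g) (by linarith : (0:ℝ) ≤ 1 - t)
      (le_of_lt ht) (by ring)
    have heq : (1 - t) • f + t • g = f + t • (g - f) := by module
    rw [heq] at hconv
    simp only [smul_eq_mul] at hconv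
    have hmin := hf (f + t • (g - f))
    have hnorm : ‖f + t • (g - f)‖ ^ 2
        = ‖f‖ ^ 2 + 2 * (t * inner ℝ f (g - f)) + t ^ 2 * ‖g - f‖ ^ 2 := by
      rw [@norm_add_sq_real, real_inner_smul_right, norm_smul]
      simp [abs_of_pos ht, mul_pow]
    have h1 : A f + lam / 2 * ‖f‖ ^ 2
        ≤ (1 - t) * A f + t * A g + lam / 2 * ‖f + t • (g - f)‖ ^ 2 :=
      le_trans hmin (by linarith)
    rw [hnorm] at h1
    have hinner : (inner ℝ f (g - f) : ℝ) = - inner ℝ f (f - g) := by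
      rw [← inner_neg_right, neg_sub]
    rw [hinner] at h1
    have ht' : 0 < t := ht
    nlinarith [sq_nonneg t, sq_nonneg ‖g - f‖]
  -- let t → 0
  by_contra hcon
  push_neg at hcon
  set D := lam / 2 * ‖g - f‖ ^ 2 with hD
  have hDnn : 0 ≤ D := by positivity
  set ε := lam * inner ℝ f (f - g) - (A g - A f) with hε
  have hεpos : 0 < ε := by simp [hε]; linarith
  have ht : 0 < ε / (D + 1) := by positivity
  set t := min 1 (ε / (D + 1)) with htdef
  have htpos : 0 < t := lt_min one_pos ht
  have := key t htpos (min_le_left _ _)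
  have htD : t * D ≤ (ε / (D + 1)) * D := by
    apply mul_le_mul_of_nonneg_right (min_le_right _ _) hDnn
  have hlt : (ε / (D + 1)) * D < ε := by
    rw [div_mul_eq_mul_div, div_lt_iff₀ (by linarith)]
    nlinarith
  linarith

/-- **Key stability inequality for L2-regularized minimizers.**
Let `H` be a real inner product space, `A B : H → ℝ` convex differentiable,
and `λ > 0`. If `f` minimizes `g ↦ A g + (λ/2)‖g‖²` over `H` and `f'`
minimizes `g ↦ B g + (λ/2)‖g‖²` over `H`, then
`λ‖f − f'‖² ≤ (A f' − A f) + (B f − B f')`. -/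
theorem l2_regularized_minimizers_stability
    {H : Type*} [NormedAddCommGroup H] [InnerProductSpace ℝ H]
    (A B : H → ℝ)
    (hAconv : ConvexOn ℝ univ A) (hAdiff : Differentiable ℝ A)
    (hBconv : ConvexOn ℝ univ B) (hBdiff : Differentiable ℝ B)
    (lam : ℝ) (hlam : 0 < lam)
    (f f' : H)
    (hf : ∀ g : H, A f + lam / 2 * ‖f‖ ^ 2 ≤ A g + lam / 2 * ‖g‖ ^ 2)
    (hf' : ∀ g : H, B f' + lam / 2 * ‖f'‖ ^ 2 ≤ B g + lam / 2 * ‖g‖ ^ 2) :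
    lam * ‖f - f'‖ ^ 2 ≤ (A f' - A f) + (B f - B f') := by
  have h1 := l2_min_first_order A hAconv lam hlam f hf f'
  have h2 := l2_min_first_order B hBconv lam hlam f' hf' f
  have hsum : lam * inner ℝ f (f - f') + lam * inner ℝ f' (f' - f)
      ≤ (A f' - A f) + (B f - B f') := by linarith
  have hexp : (inner ℝ f (f - f') : ℝ) + inner ℝ f' (f' - f) = ‖f - f'‖ ^ 2 := by
    rw [@norm_sub_sq_real, inner_sub_right, inner_sub_right,
      real_inner_comm f' f]
    ring_nf
    rw [real_inner_self_eq_norm_sq, real_inner_self_eq_norm_sq]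
    ring
  nlinarith [hexp]
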